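/- For α, β > 0 and f measurable on (0,∞) with absolutely convergent integrals, the weighted composition formula I^α_{-,2}( s^{-2α-2β} (I^β_{-,2} f)(s) )(t) = t^{-2β} (I^{α+β}_{-,2}( s^{-2α} f(s) ))(t) holds for almost all t > 0. -/

import Mathlib

open MeasureTheory Real Set

lemma beta01 {α β : ℝ} (hα : 0 < α) (hβ : 0 < β) :
    ∫ x in Ioo (0:ℝ) 1, x ^ (α - 1) * (1 - x) ^ (β - 1)
      = Gamma α * Gamma β / Gamma (α + β) := by
  have h := Complex.Gamma_mul_Gamma_eq_betaIntegral (s := (α:ℂ)) (t := (β:ℂ))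
      (by simpa using hα) (by simpa using hβ)
  have hre : (Complex.betaIntegral α β).re = ∫ x in Ioo (0:ℝ) 1, x ^ (α - 1) * (1 - x) ^ (β - 1) := by
    rw [Complex.betaIntegral]
    rw [intervalIntegral.integral_of_le zero_le_one, ← integral_Ioc_eq_integral_Ioo]
    rw [← RCLike.re_eq_complex_re, ← integral_re]
    · refine setIntegral_congr_fun measurableSet_Ioc (fun x hx => ?_)
      have hx0 : (0:ℝ) ≤ x := le_of_lt hx.1
      have hx1 : (0:ℝ) ≤ 1 - x := by linarith [hx.2]
      have e1 : (x:ℂ) ^ ((α:ℂ) - 1) = ((x ^ (α - 1) : ℝ) : ℂ) := by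
        rw [Complex.ofReal_cpow hx0]; norm_cast
      have e2 : ((1 - x : ℂ)) ^ ((β:ℂ) - 1) = (((1 - x) ^ (β - 1) : ℝ) : ℂ) := by
        rw [Complex.ofReal_cpow hx1]; push_cast; norm_cast
      rw [e1, e2, ← Complex.ofReal_mul]
      simp
    · have := Complex.betaIntegral_convergent (u := (α:ℂ)) (v := (β:ℂ))
        (by simpa using hα) (by simpa using hβ)
      exact (intervalIntegrable_iff_integrableOn_Ioc_of_le zero_le_one).1 this
  have hne : Complex.Gamma (α + β) ≠ 0 := by
    rw [show ((α:ℂ) + β) = ((α + β : ℝ) : ℂ) by push_cast; ring, Complex.Gamma_ofReal]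
    exact_mod_cast (Gamma_pos_of_pos (by linarith : (0:ℝ) < α + β)).ne'
  have hB : Complex.betaIntegral α β
      = Complex.Gamma α * Complex.Gamma β / Complex.Gamma ((α:ℂ) + β) := by
    rw [eq_div_iff hne]; linear_combination -h
  rw [hB] at hre
  rw [← hre]
  rw [show ((α:ℂ) + β) = ((α + β : ℝ) : ℂ) by push_cast; ring]
  rw [Complex.Gamma_ofReal, Complex.Gamma_ofReal, Complex.Gamma_ofReal]
  norm_cast


lemma beta_ab {α β a b : ℝ} (hα : 0 < α) (hβ : 0 < β) (ha : 0 < a) (hab : a < b) :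
    ∫ x in Ioo a b, (x - a) ^ (α - 1) * (b - x) ^ (β - 1) * x ^ (-α - β)
      = Gamma α * Gamma β / Gamma (α + β)
        * (a ^ (-β) * b ^ (-α) * (b - a) ^ (α + β - 1)) := by
  have hb : 0 < b := ha.trans hab
  have hc : 0 < b - a := by linarith
  set φ : ℝ → ℝ := fun v => a * b / (b - (b - a) * v) with hφ
  set φ' : ℝ → ℝ := fun v => a * b * (b - a) / (b - (b - a) * v) ^ 2 with hφ'
  have hDpos : ∀ v ∈ Ioo (0:ℝ) 1, 0 < b - (b - a) * v := by
    rintro v ⟨hv0, hv1⟩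
    nlinarith
  have himg : φ '' Ioo (0:ℝ) 1 = Ioo a b := by
    ext y
    constructor
    · rintro ⟨v, hv, rfl⟩
      obtain ⟨hv0, hv1⟩ := hv
      have hD := hDpos v ⟨hv0, hv1⟩
      constructor
      · rw [lt_div_iff₀ hD]
        nlinarith [mul_pos (mul_pos ha hc) hv0]
      · rw [div_lt_iff₀ hD]
        nlinarith [mul_pos (mul_pos hb hc) (show (0:ℝ) < 1 - v by linarith)]
    · rintro ⟨hy1, hy2⟩
      have hy0 : 0 < y := ha.trans hy1
      have hden : (0:ℝ) < (b - a) * y := mul_pos hc hy0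
      refine ⟨b * (y - a) / ((b - a) * y), ⟨div_pos (mul_pos hb (by linarith)) hden, ?_⟩, ?_⟩
      · rw [div_lt_one hden]; nlinarith
      · show a * b / (b - (b - a) * (b * (y - a) / ((b - a) * y))) = y
        rw [div_eq_iff]
        · field_simp
          ring
        · intro h
          apply absurd h
          have : b - (b - a) * (b * (y - a) / ((b - a) * y)) = a * b / y := by
            field_simp; ring
          rw [this]
          positivity
  have hder : ∀ v ∈ Ioo (0:ℝ) 1, HasDerivWithinAt φ (φ' v) (Ioo (0:ℝ) 1) v := by
    intro v hv
    have hD := hDpos v hv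
    have h1 : HasDerivAt (fun v : ℝ => b - (b - a) * v) (-(b - a)) v := by
      simpa using ((hasDerivAt_id v).const_mul (b - a)).const_sub b
    have h2 := (hasDerivAt_const v (a * b)).div h1 hD.ne'
    have : HasDerivAt φ (φ' v) v := by
      refine h2.congr_deriv ?_
      show _ = a * b * (b - a) / (b - (b - a) * v) ^ 2
      ring
    exact this.hasDerivWithinAt
  have hinj : InjOn φ (Ioo (0:ℝ) 1) := by
    intro v1 h1 v2 h2 heq
    have hD1 := hDpos v1 h1
    have hD2 := hDpos v2 h2
    have hab0 : 0 < a * b := by positivity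
    simp only [hφ, div_eq_div_iff hD1.ne' hD2.ne'] at heq
    have h3 := mul_left_cancel₀ (ne_of_gt hab0) heq
    have h4 : (b - a) * v1 = (b - a) * v2 := by linarith
    exact mul_left_cancel₀ hc.ne' h4
  rw [← himg, integral_image_eq_integral_abs_deriv_smul measurableSet_Ioo hder hinj]
  have hpt : ∀ v ∈ Ioo (0:ℝ) 1,
      |φ' v| • ((φ v - a) ^ (α - 1) * (b - φ v) ^ (β - 1) * (φ v) ^ (-α - β))
        = (a ^ (-β) * b ^ (-α) * (b - a) ^ (α + β - 1)) * (v ^ (α - 1) * (1 - v) ^ (β - 1)) := by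
    rintro v ⟨hv0, hv1⟩
    have hD := hDpos v ⟨hv0, hv1⟩
    have hv1' : 0 < 1 - v := by linarith
    set D := b - (b - a) * v with hDdef
    have hD' : b - (b - a) * v ≠ 0 := hD.ne'
    have e1 : φ v - a = a * (b - a) * v / D := by
      simp only [hφ, hDdef]; field_simp; ring
    have e2 : b - φ v = b * (b - a) * (1 - v) / D := by
      simp only [hφ, hDdef]; field_simp; ring
    have e3 : φ v = a * b / D := rfl
    have e4 : |φ' v| = a * b * (b - a) / D ^ 2 := by
      rw [abs_of_pos]; positivity
    rw [e1, e2, e3, e4, smul_eq_mul]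
    rw [show -α - β = -(α + β) by ring]
    rw [Real.rpow_sub (by positivity), Real.rpow_sub (by positivity),
        Real.rpow_neg (by positivity), Real.rpow_one, Real.rpow_one,
        Real.rpow_add (by positivity : (0:ℝ) < a * b / D),
        Real.rpow_sub hc, Real.rpow_one, Real.rpow_add hc,
        Real.rpow_sub hv0, Real.rpow_one, Real.rpow_sub hv1', Real.rpow_one,
        Real.rpow_neg ha.le, Real.rpow_neg hb.le]
    rw [Real.div_rpow (by positivity) hD.le, Real.div_rpow (by positivity) hD.le,
        Real.div_rpow (by positivity) hD.le, Real.div_rpow (by positivity) hD.le,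
        Real.mul_rpow (by positivity) hv0.le, Real.mul_rpow ha.le hc.le,
        Real.mul_rpow (by positivity) hv1'.le, Real.mul_rpow hb.le hc.le,
        Real.mul_rpow ha.le hb.le, Real.mul_rpow ha.le hb.le]
    have pa1 : (0:ℝ) < a ^ α := Real.rpow_pos_of_pos ha _
    have pa2 : (0:ℝ) < a ^ β := Real.rpow_pos_of_pos ha _
    have pb1 : (0:ℝ) < b ^ α := Real.rpow_pos_of_pos hb _
    have pb2 : (0:ℝ) < b ^ β := Real.rpow_pos_of_pos hb _
    have pc1 : (0:ℝ) < (b - a) ^ α := Real.rpow_pos_of_pos hc _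
    have pc2 : (0:ℝ) < (b - a) ^ β := Real.rpow_pos_of_pos hc _
    have pv : (0:ℝ) < v ^ α := Real.rpow_pos_of_pos hv0 _
    have pw : (0:ℝ) < (1 - v) ^ β := Real.rpow_pos_of_pos hv1' _
    have pD1 : (0:ℝ) < D ^ α := Real.rpow_pos_of_pos hD _
    have pD2 : (0:ℝ) < D ^ β := Real.rpow_pos_of_pos hD _
    field_simp
  rw [setIntegral_congr_fun measurableSet_Ioo hpt, integral_const_mul, beta01 hα hβ]
  ring


lemma inner_beta {α β t u : ℝ} (hα : 0 < α) (hβ : 0 < β) (ht : 0 < t) (htu : t < u) :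
    ∫ s in Ioo t u, (s ^ (-(2*α) - 2*β) * s * (s ^ 2 - t ^ 2) ^ (α - 1)) * (u ^ 2 - s ^ 2) ^ (β - 1)
      = Gamma α * Gamma β / Gamma (α + β) / 2
        * (t ^ (-(2*β)) * u ^ (-(2*α)) * (u ^ 2 - t ^ 2) ^ (α + β - 1)) := by
  have hu : 0 < u := ht.trans htu
  set g : ℝ → ℝ := fun x => (x - t ^ 2) ^ (α - 1) * (u ^ 2 - x) ^ (β - 1) * x ^ (-α - β) with hg
  have himg : (fun s : ℝ => s ^ 2) '' Ioo t u = Ioo (t ^ 2) (u ^ 2) := by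
    ext x
    constructor
    · rintro ⟨s, ⟨hs1, hs2⟩, rfl⟩
      exact ⟨by simp only; nlinarith, by simp only; nlinarith⟩
    · rintro ⟨hx1, hx2⟩
      have hx0 : (0:ℝ) ≤ x := le_trans (by positivity) hx1.le
      refine ⟨Real.sqrt x, ⟨?_, ?_⟩, Real.sq_sqrt hx0⟩
      · calc t = Real.sqrt (t ^ 2) := by rw [Real.sqrt_sq ht.le]
          _ < Real.sqrt x := Real.sqrt_lt_sqrt (by positivity) hx1
      · calc Real.sqrt x < Real.sqrt (u ^ 2) := Real.sqrt_lt_sqrt hx0 hx2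
          _ = u := Real.sqrt_sq hu.le
  have hder : ∀ s ∈ Ioo t u, HasDerivWithinAt (fun s : ℝ => s ^ 2) (2 * s) (Ioo t u) s := by
    intro s _
    have := hasDerivAt_pow 2 s
    simpa using this.hasDerivWithinAt
  have hinj : InjOn (fun s : ℝ => s ^ 2) (Ioo t u) := by
    rintro s1 ⟨h1, _⟩ s2 ⟨h2, _⟩ heq
    simp only at heq
    have h0 : (s1 - s2) * (s1 + s2) = 0 := by linear_combination heq
    rcases mul_eq_zero.1 h0 with h | h
    · linarith
    · linarith
  have key := integral_image_eq_integral_abs_deriv_smul measurableSet_Ioo hder hinj g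
  rw [himg] at key
  have hpt : ∀ s ∈ Ioo t u,
      (s ^ (-(2*α) - 2*β) * s * (s ^ 2 - t ^ 2) ^ (α - 1)) * (u ^ 2 - s ^ 2) ^ (β - 1)
        = (1/2) * (|2 * s| • g (s ^ 2)) := by
    rintro s ⟨hs1, hs2⟩
    have hs0 : 0 < s := ht.trans hs1
    have e1 : |2 * s| = 2 * s := abs_of_pos (by linarith)
    have e2 : ((s ^ 2 : ℝ)) ^ (-α - β) = s ^ (-(2*α) - 2*β) := by
      rw [← Real.rpow_natCast s 2, ← Real.rpow_mul hs0.le]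
      norm_num
      ring_nf
    rw [smul_eq_mul, e1, hg]
    simp only
    rw [e2]
    ring
  rw [setIntegral_congr_fun measurableSet_Ioo hpt, integral_const_mul, ← key,
      beta_ab hα hβ (by positivity) (by nlinarith)]
  have e3 : ((t ^ 2 : ℝ)) ^ (-β) = t ^ (-(2*β)) := by
    rw [← Real.rpow_natCast t 2, ← Real.rpow_mul ht.le]
    norm_num
  have e4 : ((u ^ 2 : ℝ)) ^ (-α) = u ^ (-(2*α)) := by
    rw [← Real.rpow_natCast u 2, ← Real.rpow_mul hu.le]
    norm_num
  rw [e3, e4]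
  ring


/-- Right-sided modified Erdélyi–Kober fractional integral of order `α`. -/
noncomputable def EKminus (α : ℝ) (f : ℝ → ℝ) (t : ℝ) : ℝ :=
  2 * (Real.Gamma α)⁻¹ * ∫ s in Ioi t, f s * s * (s ^ 2 - t ^ 2) ^ (α - 1)

/-- The weighted composition formula
`I^α_{-,2}( s^{-2α-2β} (I^β_{-,2} f)(s) )(t) = t^{-2β} (I^{α+β}_{-,2}( s^{-2α} f(s) ))(t)`
for almost all `t > 0`, provided all integrals converge absolutely. -/
theorem ek_minus_weighted_composition (α β : ℝ) (hα : 0 < α) (hβ : 0 < β) (f : ℝ → ℝ)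
    (hmeas : Measurable f)
    (habs₁ : ∀ t > (0 : ℝ),
      ∫⁻ s in Ioi t,
        ENNReal.ofReal (|f s| * s ^ (-(2 * α)) * s * (s ^ 2 - t ^ 2) ^ (α + β - 1)) < ⊤)
    (habs₂ : ∀ t > (0 : ℝ),
      ∫⁻ s in Ioi t,
        ENNReal.ofReal (s ^ (-(2 * α) - 2 * β) * s * (s ^ 2 - t ^ 2) ^ (α - 1)) *
          (∫⁻ u in Ioi s, ENNReal.ofReal (|f u| * u * (u ^ 2 - s ^ 2) ^ (β - 1))) < ⊤) :
    ∀ᵐ t ∂(volume.restrict (Ioi (0 : ℝ))),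
      EKminus α (fun s => s ^ (-(2 * α) - 2 * β) * EKminus β f s) t
        = t ^ (-(2 * β)) * EKminus (α + β) (fun s => s ^ (-(2 * α)) * f s) t := by
  have hΓα := Real.Gamma_pos_of_pos hα
  have hΓβ := Real.Gamma_pos_of_pos hβ
  rw [ae_restrict_iff' measurableSet_Ioi]
  refine Filter.Eventually.of_forall (fun t ht' => ?_)
  have ht : (0:ℝ) < t := ht'
  set W : ℝ → ℝ := fun s => s ^ (-(2*α) - 2*β) * s * (s ^ 2 - t ^ 2) ^ (α - 1) with hW
  set k : ℝ → ℝ → ℝ := fun s u => f u * u * (u ^ 2 - s ^ 2) ^ (β - 1) with hk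
  set K : ℝ → ℝ → ℝ := fun s u => W s * k s u with hK
  set Kp : ℝ × ℝ → ℝ := fun p => if p.1 < p.2 then K p.1 p.2 else 0 with hKp
  have hKm : Measurable Kp := by
    refine Measurable.ite (measurableSet_lt measurable_fst measurable_snd) ?_ measurable_const
    simp only [hK, hW, hk]
    fun_prop
  -- indicator descriptions
  have hIndS : ∀ s : ℝ, (fun u => Kp (s, u)) = (Ioi s).indicator (K s) := by
    intro s; funext u
    by_cases h : s < u <;> simp [hKp, Set.indicator, h, mem_Ioi]
  have hIndU : ∀ u : ℝ, (fun s => Kp (s, u)) = (Iio u).indicator (fun s => K s u) := by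
    intro u; funext s
    by_cases h : s < u <;> simp [hKp, Set.indicator, h, mem_Iio]
  -- integrability on the product
  have hint : Integrable Kp ((volume.restrict (Ioi t)).prod (volume.restrict (Ioi t))) := by
    refine ⟨hKm.aestronglyMeasurable, ?_⟩
    have hfin : (∫⁻ p, ↑‖Kp p‖₊ ∂((volume.restrict (Ioi t)).prod (volume.restrict (Ioi t)))) < ⊤ := by
      rw [lintegral_prod _ hKm.nnnorm.coe_nnreal_ennreal.aemeasurable]
      have heq : ∫⁻ s in Ioi t, ∫⁻ u in Ioi t, ↑‖Kp (s, u)‖₊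
          = ∫⁻ s in Ioi t, ENNReal.ofReal (W s)
              * ∫⁻ u in Ioi s, ENNReal.ofReal (|f u| * u * (u ^ 2 - s ^ 2) ^ (β - 1)) := by
        refine setLIntegral_congr_fun measurableSet_Ioi (fun s hs => ?_)
        have hts : t < s := hs
        have hs0 : (0:ℝ) < s := ht.trans hs
        have hW0 : 0 ≤ W s := by
          simp only [hW]
          have h1 : (0:ℝ) < s ^ (-(2*α) - 2*β) := Real.rpow_pos_of_pos hs0 _
          have h2 : (0:ℝ) < (s ^ 2 - t ^ 2) ^ (α - 1) :=
            Real.rpow_pos_of_pos (by nlinarith) _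
          positivity
        have e1 : (fun u => (↑‖Kp (s, u)‖₊ : ENNReal))
            = (Ioi s).indicator (fun u => ENNReal.ofReal |K s u|) := by
          funext u
          by_cases h : s < u <;>
            simp [hKp, Set.indicator, h, mem_Ioi, ← enorm_eq_nnnorm, Real.enorm_eq_ofReal_abs]
        rw [e1, lintegral_indicator measurableSet_Ioi,
            Measure.restrict_restrict measurableSet_Ioi,
            inter_eq_left.mpr (Ioi_subset_Ioi hs.le)]
        rw [← lintegral_const_mul _ (by fun_prop :
          Measurable fun u : ℝ => ENNReal.ofReal (|f u| * u * (u ^ 2 - s ^ 2) ^ (β - 1)))]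
        refine setLIntegral_congr_fun measurableSet_Ioi (fun u hu => ?_)
        have hsu : s < u := hu
        have hu0 : (0:ℝ) < u := hs0.trans hu
        have hY : (0:ℝ) < (u ^ 2 - s ^ 2) ^ (β - 1) :=
          Real.rpow_pos_of_pos (by nlinarith) _
        have : |K s u| = W s * (|f u| * u * (u ^ 2 - s ^ 2) ^ (β - 1)) := by
          simp only [hK, hk]
          rw [abs_mul, abs_of_nonneg hW0, abs_mul, abs_mul,
              abs_of_pos hu0, abs_of_pos hY]
        rw [this, ENNReal.ofReal_mul hW0]
      rw [heq]
      simpa only [hW] using habs₂ t ht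
    exact hfin
  -- Fubini
  have swap := integral_integral_swap (μ := volume.restrict (Ioi t))
    (ν := volume.restrict (Ioi t)) (f := fun s u => Kp (s, u)) hint
  have left_eq : ∫ s in Ioi t, ∫ u in Ioi t, Kp (s, u) = ∫ s in Ioi t, ∫ u in Ioi s, K s u := by
    refine setIntegral_congr_fun measurableSet_Ioi fun s hs => ?_
    rw [hIndS s, integral_indicator measurableSet_Ioi,
        Measure.restrict_restrict measurableSet_Ioi,
        inter_eq_left.mpr (Ioi_subset_Ioi (le_of_lt hs))]
  have right_eq : ∫ u in Ioi t, ∫ s in Ioi t, Kp (s, u) = ∫ u in Ioi t, ∫ s in Ioo t u, K s u := by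
    refine setIntegral_congr_fun measurableSet_Ioi fun u hu => ?_
    rw [hIndU u, integral_indicator measurableSet_Iio,
        Measure.restrict_restrict measurableSet_Iio, Iio_inter_Ioi]
  have fub : ∫ s in Ioi t, ∫ u in Ioi s, K s u = ∫ u in Ioi t, ∫ s in Ioo t u, K s u := by
    rw [← left_eq, ← right_eq]; exact swap
  -- evaluate inner integral
  have inner_eval : EqOn (fun u => ∫ s in Ioo t u, K s u)
      (fun u => (Gamma α * Gamma β / Gamma (α + β) / 2 * t ^ (-(2*β)))
        * ((u ^ (-(2*α)) * f u) * u * (u ^ 2 - t ^ 2) ^ (α + β - 1))) (Ioi t) := by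
    intro u hu
    have h1 : ∫ s in Ioo t u, K s u
        = ∫ s in Ioo t u, (f u * u)
            * ((s ^ (-(2*α) - 2*β) * s * (s ^ 2 - t ^ 2) ^ (α - 1)) * (u ^ 2 - s ^ 2) ^ (β - 1)) :=
      setIntegral_congr_fun measurableSet_Ioo fun s _ => by simp only [hK, hW, hk]; ring
    simp only
    rw [h1, integral_const_mul, inner_beta hα hβ ht hu]
    ring
  -- assemble LHS
  have lhs_eq : EKminus α (fun s => s ^ (-(2 * α) - 2 * β) * EKminus β f s) t
      = (2 * (Gamma α)⁻¹) * ((2 * (Gamma β)⁻¹) * ∫ s in Ioi t, ∫ u in Ioi s, K s u) := by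
    simp only [EKminus]
    congr 1
    rw [← integral_const_mul]
    refine setIntegral_congr_fun measurableSet_Ioi fun s hs => ?_
    calc s ^ (-(2 * α) - 2 * β) * (2 * (Gamma β)⁻¹ * ∫ u in Ioi s, f u * u * (u ^ 2 - s ^ 2) ^ (β - 1))
          * s * (s ^ 2 - t ^ 2) ^ (α - 1)
        = 2 * (Gamma β)⁻¹ * (W s * ∫ u in Ioi s, k s u) := by
          simp only [hW, hk]; ring
      _ = 2 * (Gamma β)⁻¹ * ∫ u in Ioi s, W s * k s u := by rw [integral_const_mul]
      _ = 2 * (Gamma β)⁻¹ * ∫ u in Ioi s, K s u := rfl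
  rw [lhs_eq, fub, setIntegral_congr_fun measurableSet_Ioi inner_eval, integral_const_mul]
  simp only [EKminus]
  have hΓαβ := Real.Gamma_pos_of_pos (show (0:ℝ) < α + β by linarith)
  have hconst : (2 * (Gamma α)⁻¹) * ((2 * (Gamma β)⁻¹)
      * (Gamma α * Gamma β / Gamma (α + β) / 2 * t ^ (-(2*β))))
      = t ^ (-(2 * β)) * (2 * (Gamma (α + β))⁻¹) := by
    rw [show -(2*β) = -(2 * β) by ring]
    field_simp
  calc 2 * (Gamma α)⁻¹ * (2 * (Gamma β)⁻¹ * (Gamma α * Gamma β / Gamma (α + β) / 2 * t ^ (-(2*β))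
        * ∫ u in Ioi t, (u ^ (-(2*α)) * f u) * u * (u ^ 2 - t ^ 2) ^ (α + β - 1)))
      = ((2 * (Gamma α)⁻¹) * ((2 * (Gamma β)⁻¹)
          * (Gamma α * Gamma β / Gamma (α + β) / 2 * t ^ (-(2*β)))))
        * ∫ u in Ioi t, (u ^ (-(2*α)) * f u) * u * (u ^ 2 - t ^ 2) ^ (α + β - 1) := by ring
    _ = t ^ (-(2 * β)) * (2 * (Gamma (α + β))⁻¹
          * ∫ u in Ioi t, u ^ (-(2 * α)) * f u * u * (u ^ 2 - t ^ 2) ^ (α + β - 1)) := by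
        rw [hconst]
        rw [show (fun u : ℝ => (u ^ (-(2*α)) * f u) * u * (u ^ 2 - t ^ 2) ^ (α + β - 1))
            = fun u : ℝ => u ^ (-(2 * α)) * f u * u * (u ^ 2 - t ^ 2) ^ (α + β - 1) from rfl]
        ring
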